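/- arXiv:2303.09848 — 5 statements merged into one kernel-verified Lean document; each statement's English description precedes it below -/
import Mathlib

section
/- For any distinct real numbers ν₁,…,ν_m and any s ∈ ℝ, the m×m matrix with entries K_s^Ai(ν_i,ν_j) := ∫₀^∞ Ai(ν_i+η+s)Ai(ν_j+η+s) dη is positive definite. -/
open MeasureTheory Filter Set

private lemma airy_zero_of_zero_on_ray (Ai : ℝ → ℝ) (hC2 : ContDiff ℝ 2 Ai)
    (hODE : ∀ x, deriv (deriv Ai) x = x * Ai x)
    (b : ℝ) (hz : ∀ x, b < x → Ai x = 0) : Ai = 0 := by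
  have hAd : Differentiable ℝ Ai := hC2.differentiable two_ne_zero
  have h1 : ContDiff ℝ 1 (deriv Ai) := by
    have h := (contDiff_succ_iff_deriv (n := 1)).mp (by exact_mod_cast hC2)
    exact h.2.2
  have hAd' : Differentiable ℝ (deriv Ai) := h1.differentiable one_ne_zero
  funext x0
  by_cases hx0 : b < x0
  · simpa using hz x0 hx0
  push_neg at hx0
  set T : ℝ := b + 1 with hT
  have hx0T : x0 ≤ T := by simp only [hT]; linarith
  set R : ℝ := max |x0| |T| with hR
  have hR0 : 0 ≤ R := le_trans (abs_nonneg x0) (le_max_left _ _)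
  set K : NNReal := ⟨max 1 R, le_trans zero_le_one (le_max_left _ _)⟩ with hK
  set v : ℝ → ℝ × ℝ → ℝ × ℝ := fun t p => (p.2, (max (min t T) x0) * p.1) with hv
  have hclamp : ∀ t ∈ Set.Icc x0 T, max (min t T) x0 = t := fun t ht => by
    rw [min_eq_left ht.2, max_eq_left ht.1]
  have hcbd : ∀ t, |max (min t T) x0| ≤ R := by
    intro t
    rw [abs_le]
    constructor
    · have h1 : -R ≤ x0 := by
        have := neg_abs_le x0
        have h2 : -R ≤ -|x0| := neg_le_neg (le_max_left _ _)
        linarith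
      exact le_trans h1 (le_max_right _ _)
    · apply max_le
      · exact le_trans (min_le_right _ _) (le_trans (le_abs_self T) (le_max_right _ _))
      · exact le_trans (le_abs_self x0) (le_max_left _ _)
  have hlip : ∀ t, LipschitzOnWith K (v t) (Set.univ : Set (ℝ × ℝ)) := by
    intro t
    apply LipschitzWith.lipschitzOnWith
    rw [lipschitzWith_iff_dist_le_mul]
    intro p q
    have hc : |max (min t T) x0| ≤ R := hcbd t
    have hKc : (K : ℝ) = max 1 R := rfl
    rw [Prod.dist_eq, Prod.dist_eq]
    simp only [hv]
    have hdd : dist (max (min t T) x0 * p.1) (max (min t T) x0 * q.1)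
        = |max (min t T) x0| * dist p.1 q.1 := by
      rw [Real.dist_eq, Real.dist_eq, ← mul_sub, abs_mul]
    have hmax0 : (0:ℝ) ≤ max (dist p.1 q.1) (dist p.2 q.2) :=
      le_trans dist_nonneg (le_max_left _ _)
    apply max_le
    · calc dist p.2 q.2 ≤ max (dist p.1 q.1) (dist p.2 q.2) := le_max_right _ _
        _ = 1 * max (dist p.1 q.1) (dist p.2 q.2) := (one_mul _).symm
        _ ≤ (K : ℝ) * max (dist p.1 q.1) (dist p.2 q.2) := by
            rw [hKc]; exact mul_le_mul_of_nonneg_right (le_max_left _ _) hmax0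
    · rw [hdd]
      calc |max (min t T) x0| * dist p.1 q.1
          ≤ R * max (dist p.1 q.1) (dist p.2 q.2) :=
            mul_le_mul hc (le_max_left _ _) dist_nonneg hR0
        _ ≤ (K : ℝ) * max (dist p.1 q.1) (dist p.2 q.2) := by
            rw [hKc]; exact mul_le_mul_of_nonneg_right (le_max_right _ _) hmax0
  set F : ℝ → ℝ × ℝ := fun t => (Ai t, deriv Ai t) with hF
  have hFcont : ContinuousOn F (Set.Icc x0 T) :=
    (hC2.continuous.prodMk (hC2.continuous_deriv one_le_two)).continuousOn
  have hdF : ∀ t ∈ Set.Ioc x0 T, HasDerivWithinAt F (v t (F t)) (Set.Iic t) t := by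
    intro t ht
    have h := ((hAd t).hasDerivAt.prodMk (hAd' t).hasDerivAt)
    have heq : v t (F t) = (deriv Ai t, deriv (deriv Ai) t) := by
      simp only [hv, hF]
      rw [hODE, hclamp t (Set.Ioc_subset_Icc_self ht)]
    rw [heq]
    exact h.hasDerivWithinAt
  have hdG : ∀ t ∈ Set.Ioc x0 T, HasDerivWithinAt (fun _ : ℝ => ((0:ℝ), (0:ℝ)))
      (v t ((0:ℝ), (0:ℝ))) (Set.Iic t) t := by
    intro t ht
    have heq : v t ((0:ℝ), (0:ℝ)) = ((0:ℝ), (0:ℝ)) := by simp [hv]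
    rw [heq]
    exact hasDerivWithinAt_const _ _ _
  have hTz : Ai T = 0 := hz T (by simp only [hT]; linarith)
  have hev : Ai =ᶠ[nhds T] (fun _ => 0) := by
    filter_upwards [Ioi_mem_nhds (show b < T by simp only [hT]; linarith)] with y hy
      using hz y hy
  have hdTz : deriv Ai T = 0 := by rw [hev.deriv_eq]; simp
  have huniq := ODE_solution_unique_of_mem_Icc_left (v := v) (s := fun _ => Set.univ)
    (fun t _ => hlip t) hFcont hdF (fun _ _ => trivial) continuousOn_const hdG (fun _ _ => trivial)
    (by simp [hF, hTz, hdTz])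
  have hx := huniq ⟨le_rfl, hx0T⟩
  simpa [hF] using congrArg Prod.fst hx

private lemma airy_coeffs_zero (Ai : ℝ → ℝ) (hC2 : ContDiff ℝ 2 Ai)
    (hODE : ∀ x, deriv (deriv Ai) x = x * Ai x) (hAi_ne : Ai ≠ 0)
    (m : ℕ) (a : Fin m → ℝ) (ha : Function.Injective a) (c : Fin m → ℝ)
    (hz : ∀ x ∈ Set.Ioi (0:ℝ), ∑ i, c i * Ai (x + a i) = 0) : c = 0 := by
  have hAd : Differentiable ℝ Ai := hC2.differentiable two_ne_zero
  have h1 : ContDiff ℝ 1 (deriv Ai) := by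
    have h := (contDiff_succ_iff_deriv (n := 1)).mp (by exact_mod_cast hC2)
    exact h.2.2
  have hAd' : Differentiable ℝ (deriv Ai) := h1.differentiable one_ne_zero
  have key : ∀ k : ℕ, ∀ x ∈ Set.Ioi (0:ℝ), ∑ i, c i * a i ^ k * Ai (x + a i) = 0 := by
    intro k
    induction k with
    | zero => intro x hx; simpa using hz x hx
    | succ k ih =>
      set g : ℝ → ℝ := fun x => ∑ i, c i * a i ^ k * Ai (x + a i) with hgdef
      set g' : ℝ → ℝ := fun x => ∑ i, c i * a i ^ k * deriv Ai (x + a i) with hg'def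
      have hdg : ∀ x, HasDerivAt g (g' x) x := by
        intro x
        apply HasDerivAt.fun_sum
        intro i _
        have h1 : HasDerivAt (fun y => Ai (y + a i)) (deriv Ai (x + a i)) x := by
          have := ((hAd (x + a i)).hasDerivAt).comp x ((hasDerivAt_id x).add_const (a i))
          simpa [Function.comp_def] using this
        simpa [mul_comm] using h1.const_mul (c i * a i ^ k)
      have hdg' : ∀ x, HasDerivAt g'
          (∑ i, c i * a i ^ k * ((x + a i) * Ai (x + a i))) x := by
        intro x
        apply HasDerivAt.fun_sum
        intro i _
        have h1 : HasDerivAt (fun y => deriv Ai (y + a i)) ((x + a i) * Ai (x + a i)) x := by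
          have := ((hAd' (x + a i)).hasDerivAt).comp x ((hasDerivAt_id x).add_const (a i))
          simpa [hODE, Function.comp_def] using this
        simpa [mul_comm] using h1.const_mul (c i * a i ^ k)
      have hg'0 : ∀ x ∈ Set.Ioi (0:ℝ), g' x = 0 := by
        intro x hx
        have hev : g =ᶠ[nhds x] (fun _ => 0) := by
          filter_upwards [isOpen_Ioi.mem_nhds hx] with y hy using ih y hy
        have hd0 : deriv g x = 0 := by rw [hev.deriv_eq]; simp
        rwa [(hdg x).deriv] at hd0
      intro x hx
      have hev' : g' =ᶠ[nhds x] (fun _ => 0) := by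
        filter_upwards [isOpen_Ioi.mem_nhds hx] with y hy using hg'0 y hy
      have h2 : deriv g' x = 0 := by rw [hev'.deriv_eq]; simp
      rw [(hdg' x).deriv] at h2
      have h3 : ∑ i, c i * a i ^ k * ((x + a i) * Ai (x + a i))
          = x * g x + ∑ i, c i * a i ^ (k + 1) * Ai (x + a i) := by
        simp only [hgdef, Finset.mul_sum, ← Finset.sum_add_distrib]
        exact Finset.sum_congr rfl fun i _ => by ring
      rw [h3] at h2
      have hgx : g x = 0 := ih x hx
      rw [hgx, mul_zero, zero_add] at h2
      exact h2
  have hterm : ∀ x ∈ Set.Ioi (0:ℝ), ∀ i, c i * Ai (x + a i) = 0 := by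
    intro x hx i
    have h := Matrix.eq_zero_of_forall_pow_sum_mul_pow_eq_zero
      (f := a) (v := fun i => c i * Ai (x + a i)) ha (fun kk => by
        rw [← key (kk : ℕ) x hx]
        exact Finset.sum_congr rfl fun j _ => by ring)
    simpa using congrFun h i
  funext i
  simp only [Pi.zero_apply]
  by_contra hci
  have hray : ∀ y, a i < y → Ai y = 0 := by
    intro y hy
    have h := hterm (y - a i) (by simp only [Set.mem_Ioi]; linarith) i
    rcases mul_eq_zero.mp h with h' | h'
    · exact absurd h' hci
    · simpa using h'
  exact hAi_ne (airy_zero_of_zero_on_ray Ai hC2 hODE (a i) hray)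

/-- For distinct reals `ν₁,…,ν_m` and any `s ∈ ℝ`, the `m×m` matrix with entries
`K_s^Ai(ν_i,ν_j) = ∫₀^∞ Ai(ν_i+η+s)Ai(ν_j+η+s) dη` is positive definite.
`Ai` is the Airy function (`Ai'' = x·Ai`, not identically zero, square integrable on
half-lines). -/
theorem shifted_airy_kernel_matrix_posDef
    (Ai : ℝ → ℝ) (hC2 : ContDiff ℝ 2 Ai)
    (hODE : ∀ x, deriv (deriv Ai) x = x * Ai x)
    (hAi_ne : Ai ≠ 0)
    (s : ℝ) (m : ℕ) (ν : Fin m → ℝ) (hν : Function.Injective ν)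
    (hL2 : ∀ i, MemLp (fun η => Ai (ν i + η + s)) 2 (volume.restrict (Set.Ioi (0:ℝ)))) :
    (Matrix.of fun i j : Fin m =>
      ∫ η in Set.Ioi (0:ℝ), Ai (ν i + η + s) * Ai (ν j + η + s)).PosDef := by
  have hcont : ∀ i : Fin m, Continuous (fun η => Ai (ν i + η + s)) := fun i =>
    hC2.continuous.comp (by continuity)
  have hmul : ∀ i j : Fin m, Integrable (fun η => Ai (ν i + η + s) * Ai (ν j + η + s))
      (volume.restrict (Set.Ioi (0:ℝ))) := by
    intro i j
    have h := (hL2 j).smul (hL2 i) (r := 1) (hpqr := ⟨by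
      rw [inv_one]
      exact ENNReal.inv_two_add_inv_two⟩)
    rw [memLp_one_iff_integrable] at h
    exact h
  rw [Matrix.posDef_iff_dotProduct_mulVec]
  constructor
  · rw [Matrix.IsHermitian]
    ext i j
    simp only [Matrix.conjTranspose_apply, Matrix.of_apply, star_trivial]
    congr 1
    funext η
    ring
  · intro c hc
    have hsq : ∀ η, (∑ i, c i * Ai (ν i + η + s)) ^ 2
        = ∑ i, ∑ j, (c i * c j) * (Ai (ν i + η + s) * Ai (ν j + η + s)) := by
      intro η
      rw [sq, Finset.sum_mul_sum]
      exact Finset.sum_congr rfl fun i _ => Finset.sum_congr rfl fun j _ => by ring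
    have hint : ∫ η in Set.Ioi (0:ℝ), (∑ i, c i * Ai (ν i + η + s)) ^ 2
        = ∑ i, ∑ j, (c i * c j) * ∫ η in Set.Ioi (0:ℝ),
            Ai (ν i + η + s) * Ai (ν j + η + s) := by
      simp_rw [hsq]
      rw [integral_finset_sum _ (fun i _ =>
        integrable_finset_sum _ (fun j _ => (hmul i j).const_mul _))]
      refine Finset.sum_congr rfl fun i _ => ?_
      rw [integral_finset_sum _ (fun j _ => (hmul i j).const_mul _)]
      exact Finset.sum_congr rfl fun j _ => integral_const_mul _ _
    have hdot : dotProduct (star c) ((Matrix.of fun i j : Fin m =>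
          ∫ η in Set.Ioi (0:ℝ), Ai (ν i + η + s) * Ai (ν j + η + s)).mulVec c)
        = ∑ i, ∑ j, (c i * c j) * ∫ η in Set.Ioi (0:ℝ),
            Ai (ν i + η + s) * Ai (ν j + η + s) := by
      simp only [dotProduct, Matrix.mulVec, Pi.star_apply, star_trivial,
        Matrix.of_apply]
      refine Finset.sum_congr rfl fun i _ => ?_
      rw [Finset.mul_sum]
      exact Finset.sum_congr rfl fun j _ => by ring
    rw [hdot, ← hint]
    have hFint : Integrable (fun η => (∑ i, c i * Ai (ν i + η + s)) ^ 2)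
        (volume.restrict (Set.Ioi (0:ℝ))) := by
      have heq : (fun η => (∑ i, c i * Ai (ν i + η + s)) ^ 2)
          = fun η => ∑ i, ∑ j, (c i * c j) * (Ai (ν i + η + s) * Ai (ν j + η + s)) :=
        funext hsq
      rw [heq]
      exact integrable_finset_sum _ fun i _ =>
        integrable_finset_sum _ fun j _ => (hmul i j).const_mul _
    have hnn : 0 ≤ ∫ η in Set.Ioi (0:ℝ), (∑ i, c i * Ai (ν i + η + s)) ^ 2 :=
      integral_nonneg fun η => sq_nonneg _
    rcases hnn.lt_or_eq with h | h
    · exact h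
    exfalso
    have hzero : (fun η => (∑ i, c i * Ai (ν i + η + s)) ^ 2)
        =ᵐ[volume.restrict (Set.Ioi (0:ℝ))] 0 := by
      rw [← integral_eq_zero_iff_of_nonneg (fun η => sq_nonneg _) hFint]
      exact h.symm
    have hFzero : ∀ᵐ η ∂(volume.restrict (Set.Ioi (0:ℝ))),
        (∑ i, c i * Ai (ν i + η + s)) = 0 := by
      filter_upwards [hzero] with η hη
      exact (pow_eq_zero_iff two_ne_zero).mp (by simpa using hη)
    have hFc : Continuous (fun η => ∑ i, c i * Ai (ν i + η + s)) :=
      continuous_finset_sum _ fun i _ => continuous_const.mul (hcont i)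
    have hF0 : ∀ x ∈ Set.Ioi (0:ℝ), (∑ i, c i * Ai (ν i + x + s)) = 0 := by
      by_contra hcon
      push_neg at hcon
      obtain ⟨x, hx, hxne⟩ := hcon
      set U : Set ℝ := {η | (∑ i, c i * Ai (ν i + η + s)) ≠ 0} ∩ Set.Ioi 0 with hU
      have hUopen : IsOpen U :=
        ((isOpen_compl_singleton.preimage hFc)).inter isOpen_Ioi
      have hxU : x ∈ U := ⟨hxne, hx⟩
      have hUvol : volume U = 0 := by
        have hnull : (volume.restrict (Set.Ioi (0:ℝ)))
            {η | (∑ i, c i * Ai (ν i + η + s)) ≠ 0} = 0 := by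
          rw [← MeasureTheory.ae_iff] at *
          exact hFzero
        rwa [Measure.restrict_apply' measurableSet_Ioi] at hnull
      exact absurd hUvol (hUopen.measure_pos volume ⟨x, hxU⟩).ne'
    have hc0 : c = 0 := by
      apply airy_coeffs_zero Ai hC2 hODE hAi_ne m (fun i => ν i + s)
        (fun i j hij => hν (by have h' : ν i + s = ν j + s := hij; linarith)) c
      intro x hx
      rw [← hF0 x hx]
      exact Finset.sum_congr rfl fun i _ => by ring_nf
    exact hc hc0
end

section
/- For any s ∈ ℝ, the functions t ↦ Ai(ν₁+t), …, t ↦ Ai(ν_m+t), viewed as elements of L²(s,+∞), are linearly independent whenever ν₁,…,ν_m are distinct real numbers. -/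
open MeasureTheory Filter Set

private lemma coeFn_fin_sum {α E : Type*} [MeasurableSpace α] {μ : MeasureTheory.Measure α}
    [NormedAddCommGroup E] {p : ENNReal} {ι : Type*} (s : Finset ι)
    (f : ι → MeasureTheory.Lp E p μ) :
    ⇑(∑ i ∈ s, f i) =ᵐ[μ] fun a => ∑ i ∈ s, f i a := by
  classical
  induction s using Finset.induction_on with
  | empty => simp only [Finset.sum_empty]; exact MeasureTheory.Lp.coeFn_zero E p μ
  | @insert j t hj ih =>
    rw [Finset.sum_insert hj]
    filter_upwards [MeasureTheory.Lp.coeFn_add (f j) (∑ i ∈ t, f i), ih] with a h1 h2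
    show (⇑(f j + ∑ i ∈ t, f i)) a = ∑ i ∈ insert j t, (f i) a
    rw [Finset.sum_insert hj, h1, Pi.add_apply, h2]

private lemma deriv_zero_of_zero_on_Ioi {f : ℝ → ℝ} {s : ℝ} (h : ∀ t ∈ Ioi s, f t = 0) :
    ∀ t ∈ Ioi s, deriv f t = 0 := by
  intro t ht
  have hev : f =ᶠ[nhds t] (fun _ => (0 : ℝ)) :=
    eventually_of_mem (isOpen_Ioi.mem_nhds ht) h
  rw [hev.deriv_eq]
  simp

/-- Backward uniqueness: a C² solution of `g'' = x g` vanishing on a half-line `(a, ∞)`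
vanishes everywhere. -/
private lemma airy_backward_unique (g : ℝ → ℝ) (hC2 : ContDiff ℝ 2 g)
    (hODE : ∀ x, deriv (deriv g) x = x * g x)
    (a : ℝ) (h0 : ∀ x ∈ Ioi a, g x = 0) : g = 0 := by
  have hd1 : Differentiable ℝ g := hC2.differentiable two_ne_zero
  have h2 : ContDiff ℝ (1 + 1) g := by norm_num; exact hC2
  have hd2 : Differentiable ℝ (deriv g) :=
    ((contDiff_succ_iff_deriv.mp h2).2.2).differentiable one_ne_zero
  have hd0 : ∀ x ∈ Ioi a, deriv g x = 0 := deriv_zero_of_zero_on_Ioi h0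
  set E : ℝ → ℝ := fun x => g x ^ 2 + (deriv g x) ^ 2 with hEdef
  have hE : ∀ x, HasDerivAt E (2 * (1 + x) * (g x * deriv g x)) x := by
    intro x
    have hg : HasDerivAt g (deriv g x) x := (hd1 x).hasDerivAt
    have hg' : HasDerivAt (deriv g) (x * g x) x := by
      have := (hd2 x).hasDerivAt
      rwa [hODE x] at this
    have h1 : HasDerivAt (fun y => g y * g y + deriv g y * deriv g y)
        (deriv g x * g x + g x * deriv g x + ((x * g x) * deriv g x + deriv g x * (x * g x))) x :=
      (hg.mul hg).add (hg'.mul hg')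
    have hfun : E = fun y => g y * g y + deriv g y * deriv g y := by
      funext y; rw [hEdef]; ring
    rw [hfun]
    convert h1 using 1
    ring
  have hEcont : Continuous E :=
    ((hd1.continuous.pow 2).add (hd2.continuous.pow 2))
  have hEnonneg : ∀ x, 0 ≤ E x := fun x => by positivity
  have main : ∀ x₀, x₀ ≤ a → g x₀ = 0 := by
    intro x₀ hx₀
    set b : ℝ := a + 1 with hb
    set T : ℝ := b - x₀ with hT
    have hT0 : 0 ≤ T := by rw [hT, hb]; linarith
    set K : ℝ := 1 + (|x₀| + |a| + 1) with hK
    set f : ℝ → ℝ := fun τ => E (b - τ) with hf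
    have hf' : ∀ τ, HasDerivAt f (2 * (1 + (b - τ)) * (g (b - τ) * deriv g (b - τ)) * (-1)) τ := by
      intro τ
      have hi : HasDerivAt (fun τ : ℝ => b - τ) (-1) τ := by
        simpa using (hasDerivAt_id τ).const_sub b
      exact (hE (b - τ)).comp τ hi
    have hbound : ∀ τ ∈ Ico (0:ℝ) T,
        ‖2 * (1 + (b - τ)) * (g (b - τ) * deriv g (b - τ)) * (-1)‖ ≤ K * ‖f τ‖ + 0 := by
      intro τ hτ
      obtain ⟨hτ1, hτ2⟩ := hτ
      have hx : x₀ ≤ b - τ := by rw [hT] at hτ2; linarith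
      have hx2 : b - τ ≤ b := by linarith
      have habs : |1 + (b - τ)| ≤ K := by
        rw [hK]
        have h1 : |b - τ| ≤ |x₀| + |a| + 1 := by
          rw [abs_le]
          constructor
          · linarith [neg_abs_le x₀, abs_nonneg a]
          · linarith [le_abs_self a, abs_nonneg x₀]
        calc |1 + (b - τ)| ≤ |(1:ℝ)| + |b - τ| := abs_add_le _ _
          _ ≤ 1 + (|x₀| + |a| + 1) := by rw [abs_one]; linarith
      have h2gg : |2 * (g (b - τ) * deriv g (b - τ))| ≤ E (b - τ) := by
        show |2 * (g (b - τ) * deriv g (b - τ))| ≤ g (b - τ) ^ 2 + deriv g (b - τ) ^ 2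
        rw [abs_le]
        constructor <;>
          nlinarith [sq_nonneg (g (b-τ) + deriv g (b-τ)), sq_nonneg (g (b-τ) - deriv g (b-τ))]
      have hfτ : ‖f τ‖ = E (b - τ) := by
        rw [hf]; exact abs_of_nonneg (hEnonneg _)
      rw [hfτ, add_zero]
      calc ‖2 * (1 + (b - τ)) * (g (b - τ) * deriv g (b - τ)) * (-1)‖
          = |1 + (b - τ)| * |2 * (g (b - τ) * deriv g (b - τ))| := by
            have he : 2 * (1 + (b - τ)) * (g (b - τ) * deriv g (b - τ)) * (-1)
                = -((1 + (b - τ)) * (2 * (g (b - τ) * deriv g (b - τ)))) := by ring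
            rw [Real.norm_eq_abs, he, abs_neg, abs_mul]
        _ ≤ K * E (b - τ) :=
            mul_le_mul habs h2gg (abs_nonneg _) (by rw [hK]; positivity)
    have hEb : E b = 0 := by
      have hgb : g b = 0 := h0 b (by rw [hb]; exact lt_add_one a)
      have hgb' : deriv g b = 0 := hd0 b (by rw [hb]; exact lt_add_one a)
      show g b ^ 2 + deriv g b ^ 2 = 0
      rw [hgb, hgb']; ring
    have hgr := norm_le_gronwallBound_of_norm_deriv_right_le
      (f := f) (f' := fun τ => 2 * (1 + (b - τ)) * (g (b - τ) * deriv g (b - τ)) * (-1))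
      (δ := 0) (K := K) (ε := 0) (a := 0) (b := T)
      ((hEcont.comp (continuous_const.sub continuous_id)).continuousOn)
      (fun τ _ => (hf' τ).hasDerivWithinAt)
      (by rw [hf]; simp only [sub_zero]; rw [Real.norm_eq_abs, abs_of_nonneg (hEnonneg b), hEb])
      hbound
    have hfT := hgr T ⟨hT0, le_refl T⟩
    rw [gronwallBound_ε0] at hfT
    have hfT0 : f T ≤ 0 := by
      rw [Real.norm_eq_abs, abs_of_nonneg (by rw [hf]; exact hEnonneg _)] at hfT
      simpa using hfT
    have hfTE : f T = E x₀ := by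
      show E (b - T) = E x₀
      congr 1
      rw [hT]; ring
    have hEx₀ : g x₀ ^ 2 + deriv g x₀ ^ 2 = 0 := by
      have h1 : E x₀ ≤ 0 := hfTE ▸ hfT0
      have h2 : E x₀ = 0 := le_antisymm h1 (hEnonneg x₀)
      exact h2
    nlinarith [sq_nonneg (g x₀), sq_nonneg (deriv g x₀)]
  funext x
  by_cases hx : x ≤ a
  · exact main x hx
  · exact h0 x (lt_of_not_ge hx)

/-- For any `s ∈ ℝ`, the functions `t ↦ Ai(ν_i + t)`, viewed as elements of
`L²(s,+∞)`, are linearly independent whenever the `ν_i` are distinct reals.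
`Ai` is the Airy function (`Ai'' = x·Ai`, not identically zero). -/
theorem airy_translates_linearIndependent_L2
    (Ai : ℝ → ℝ) (hC2 : ContDiff ℝ 2 Ai)
    (hODE : ∀ x, deriv (deriv Ai) x = x * Ai x)
    (hAi_ne : Ai ≠ 0)
    (s : ℝ) (m : ℕ) (ν : Fin m → ℝ) (hν : Function.Injective ν)
    (hL2 : ∀ i, MemLp (fun t => Ai (ν i + t)) 2 (volume.restrict (Set.Ioi s))) :
    LinearIndependent ℝ (fun i : Fin m => (hL2 i).toLp _) := by
  classical
  have hd1 : Differentiable ℝ Ai := hC2.differentiable two_ne_zero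
  have h2 : ContDiff ℝ (1 + 1) Ai := by norm_num; exact hC2
  have hd2 : Differentiable ℝ (deriv Ai) :=
    ((contDiff_succ_iff_deriv.mp h2).2.2).differentiable one_ne_zero
  rw [Fintype.linearIndependent_iff]
  intro c hc
  -- the pointwise linear combination
  set F : ℝ → ℝ := fun t => ∑ i, c i * Ai (ν i + t) with hFdef
  have hcontAi : ∀ (r : ℝ), Continuous fun t => Ai (r + t) := fun r =>
    hd1.continuous.comp (continuous_const.add continuous_id)
  have hFcont : Continuous F := by
    apply continuous_finset_sum
    intro i _
    exact continuous_const.mul (hcontAi (ν i))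
  -- a.e. vanishing on (s, ∞)
  have hae : F =ᵐ[volume.restrict (Set.Ioi s)] (fun _ => (0:ℝ)) := by
    have h1 := coeFn_fin_sum (μ := volume.restrict (Set.Ioi s)) Finset.univ
      (fun i => c i • (hL2 i).toLp _)
    rw [hc] at h1
    have h2' : ∀ i : Fin m, (⇑(c i • (hL2 i).toLp _) : ℝ → ℝ)
        =ᵐ[volume.restrict (Set.Ioi s)] fun t => c i * Ai (ν i + t) := by
      intro i
      filter_upwards [MeasureTheory.Lp.coeFn_smul (c i) ((hL2 i).toLp _),
        (hL2 i).coeFn_toLp] with t ht1 ht2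
      rw [ht1]
      simp [ht2]
    have hall : ∀ᵐ t ∂(volume.restrict (Set.Ioi s)),
        ∀ i : Fin m, (⇑(c i • (hL2 i).toLp _) : ℝ → ℝ) t = c i * Ai (ν i + t) :=
      MeasureTheory.ae_all_iff.2 h2'
    filter_upwards [h1.symm, hall, MeasureTheory.Lp.coeFn_zero ℝ 2 (volume.restrict (Set.Ioi s))]
      with t ht1 ht2 ht3
    show (∑ i, c i * Ai (ν i + t)) = 0
    have e1 : (∑ i, c i * Ai (ν i + t))
        = ∑ i, (⇑(c i • (hL2 i).toLp _) : ℝ → ℝ) t :=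
      Finset.sum_congr rfl fun i _ => (ht2 i).symm
    exact e1.trans (ht1.trans ht3)
  -- hence vanishing everywhere on (s, ∞)
  have hF0 : ∀ t ∈ Ioi s, F t = 0 := by
    have := MeasureTheory.Measure.eqOn_of_ae_eq (μ := volume) hae
      hFcont.continuousOn continuousOn_const
      (by rw [isOpen_Ioi.interior_eq]; exact subset_closure)
    exact fun t ht => this ht
  -- iterated application of the operator d²/dt² - t
  set G : ℕ → ℝ → ℝ := fun k t => ∑ i, c i * ν i ^ k * Ai (ν i + t) with hGdef
  have hDAi : ∀ (r t : ℝ), HasDerivAt (fun t => Ai (r + t)) (deriv Ai (r + t)) t := by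
    intro r t
    have hi : HasDerivAt (fun t : ℝ => r + t) 1 t := by
      simpa using (hasDerivAt_id t).const_add r
    simpa [Function.comp_def] using (hd1 (r + t)).hasDerivAt.comp t hi
  have hDAi' : ∀ (r t : ℝ), HasDerivAt (fun t => deriv Ai (r + t)) ((r + t) * Ai (r + t)) t := by
    intro r t
    have hi : HasDerivAt (fun t : ℝ => r + t) 1 t := by
      simpa using (hasDerivAt_id t).const_add r
    have := (hd2 (r + t)).hasDerivAt.comp t hi
    simpa [hODE (r + t), Function.comp_def] using this
  have hG1 : ∀ (k : ℕ) (t : ℝ),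
      HasDerivAt (G k) (∑ i, c i * ν i ^ k * deriv Ai (ν i + t)) t := by
    intro k t
    apply HasDerivAt.fun_sum
    intro i _
    exact (hDAi (ν i) t).const_mul (c i * ν i ^ k)
  have hG2 : ∀ (k : ℕ) (t : ℝ),
      HasDerivAt (fun t => ∑ i, c i * ν i ^ k * deriv Ai (ν i + t))
        (∑ i, c i * ν i ^ k * ((ν i + t) * Ai (ν i + t))) t := by
    intro k t
    apply HasDerivAt.fun_sum
    intro i _
    exact (hDAi' (ν i) t).const_mul (c i * ν i ^ k)
  have key : ∀ k : ℕ, ∀ t ∈ Ioi s, G k t = 0 := by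
    intro k
    induction k with
    | zero => intro t ht; simpa [hGdef] using hF0 t ht
    | succ k ih =>
      -- first derivative vanishes on (s, ∞)
      have hd0 : ∀ t ∈ Ioi s, (∑ i, c i * ν i ^ k * deriv Ai (ν i + t)) = 0 := by
        intro t ht
        have := deriv_zero_of_zero_on_Ioi ih t ht
        rwa [(hG1 k t).deriv] at this
      -- second derivative vanishes on (s, ∞)
      have hdd0 : ∀ t ∈ Ioi s, (∑ i, c i * ν i ^ k * ((ν i + t) * Ai (ν i + t))) = 0 := by
        intro t ht
        have := deriv_zero_of_zero_on_Ioi hd0 t ht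
        rwa [(hG2 k t).deriv] at this
      intro t ht
      have hsplit : (∑ i, c i * ν i ^ k * ((ν i + t) * Ai (ν i + t)))
          = G (k + 1) t + t * G k t := by
        rw [hGdef]
        simp only
        rw [Finset.mul_sum, ← Finset.sum_add_distrib]
        apply Finset.sum_congr rfl
        intro i _
        ring
      have h1 := hdd0 t ht
      rw [hsplit, ih t ht] at h1
      simpa using h1
  -- Vandermonde: each coefficient times translate vanishes
  have hcoef : ∀ t ∈ Ioi s, ∀ i, c i * Ai (ν i + t) = 0 := by
    intro t ht
    set d : Fin m → ℝ := fun i => c i * Ai (ν i + t) with hd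
    have hdet : ((Matrix.vandermonde ν).transpose).det ≠ 0 := by
      rw [Matrix.det_transpose]
      exact Matrix.det_vandermonde_ne_zero_iff.mpr hν
    have hmv : (Matrix.vandermonde ν).transpose.mulVec d = 0 := by
      funext k
      have hk : (∑ j, c j * ν j ^ (k : ℕ) * Ai (ν j + t)) = 0 := key (k : ℕ) t ht
      show ∑ j, (Matrix.vandermonde ν).transpose k j * d j = 0
      calc ∑ j, (Matrix.vandermonde ν).transpose k j * d j
          = ∑ j, c j * ν j ^ (k : ℕ) * Ai (ν j + t) := by
            apply Finset.sum_congr rfl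
            intro j _
            rw [Matrix.transpose_apply, Matrix.vandermonde_apply, hd]
            ring
        _ = 0 := hk
    have := Matrix.eq_zero_of_mulVec_eq_zero hdet hmv
    intro i
    have := congrFun this i
    simpa [hd] using this
  intro i
  by_contra hci
  have hAiz : ∀ x ∈ Ioi (ν i + s), Ai x = 0 := by
    intro x hx
    have ht : x - ν i ∈ Ioi s := by simp only [mem_Ioi] at hx ⊢; linarith
    have := hcoef (x - ν i) ht i
    have hx' : ν i + (x - ν i) = x := by ring
    rw [hx'] at this
    rcases mul_eq_zero.mp this with h | h
    · exact absurd h hci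
    · exact h
  exact hAi_ne (airy_backward_unique Ai hC2 hODE (ν i + s) hAiz)
end

section
/- If a finite linear combination ∑_{i=1}^k c_i Ai(ν_i + t) vanishes identically in t, with ν₁,…,ν_k distinct real numbers, then all coefficients c_i are zero. -/
open Filter

lemma aux_deriv_sum (F : ℝ → ℝ) (hF : Differentiable ℝ F) {k : ℕ} (ν c : Fin k → ℝ)
    (h : ∀ t : ℝ, ∑ i, c i * F (ν i + t) = 0) :
    ∀ t : ℝ, ∑ i, c i * deriv F (ν i + t) = 0 := by
  intro t
  have hfun : (fun t : ℝ => ∑ i, c i * F (ν i + t)) = fun _ => (0:ℝ) := funext h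
  have hdi : ∀ i : Fin k, DifferentiableAt ℝ (fun t : ℝ => F (ν i + t)) t :=
    fun i => (hF _).comp t ((differentiableAt_const _).add differentiableAt_id)
  have : deriv (fun t : ℝ => ∑ i, c i * F (ν i + t)) t
      = ∑ i, c i * deriv F (ν i + t) := by
    rw [deriv_fun_sum (fun i _ => ((hdi i).const_mul _))]
    refine Finset.sum_congr rfl fun i _ => ?_
    rw [deriv_const_mul _ (hdi i)]
    congr 1
    exact deriv_comp_const_add F (ν i) t
  rw [← this, hfun]
  simp

lemma airy_aux (Ai : ℝ → ℝ) (hC2 : ContDiff ℝ 2 Ai)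
    (hODE : ∀ x, deriv (deriv Ai) x = x * Ai x)
    (hAi_ne : Ai ≠ 0) :
    ∀ k (ν : Fin k → ℝ), Function.Injective ν → ∀ c : Fin k → ℝ,
      (∀ t : ℝ, ∑ i, c i * Ai (ν i + t) = 0) → ∀ i, c i = 0 := by
  intro k
  induction k with
  | zero => intro ν _ c _ i; exact i.elim0
  | succ n ih =>
    intro ν hν c hvanish
    have hAiD : Differentiable ℝ Ai := hC2.differentiable (by norm_num)
    have hAi'D : Differentiable ℝ (deriv Ai) := by
      have h2 : ContDiff ℝ ((1 : ℕ∞) + 1) Ai := by norm_num; exact_mod_cast hC2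
      exact (contDiff_succ_iff_deriv.mp h2).2.2.differentiable (by norm_num)
    have h1 := aux_deriv_sum Ai hAiD ν c hvanish
    have h2 := aux_deriv_sum (deriv Ai) hAi'D ν c h1
    have h3 : ∀ t : ℝ, ∑ i, c i * ((ν i + t) * Ai (ν i + t)) = 0 := by
      intro t; simpa [hODE] using h2 t
    set j := Fin.last n with hj
    have h4 : ∀ t : ℝ, ∑ i, (c i * (ν i - ν j)) * Ai (ν i + t) = 0 := by
      intro t
      have key : ∑ i, (c i * (ν i - ν j)) * Ai (ν i + t)
          = (∑ i, c i * ((ν i + t) * Ai (ν i + t)))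
            - (ν j + t) * ∑ i, c i * Ai (ν i + t) := by
        rw [Finset.mul_sum, ← Finset.sum_sub_distrib]
        exact Finset.sum_congr rfl fun i _ => by ring
      rw [key, h3 t, hvanish t]; ring
    have hν' : Function.Injective fun i : Fin n => ν i.castSucc :=
      fun a b h => Fin.castSucc_injective n (hν h)
    have hvanish' : ∀ t : ℝ,
        ∑ i : Fin n, (c i.castSucc * (ν i.castSucc - ν j)) * Ai (ν i.castSucc + t) = 0 := by
      intro t
      have := h4 t
      rw [Fin.sum_univ_castSucc] at this
      simpa [hj] using this
    have hc' := ih (fun i => ν i.castSucc) hν'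
      (fun i => c i.castSucc * (ν i.castSucc - ν j)) hvanish'
    have hcast : ∀ i : Fin n, c i.castSucc = 0 := by
      intro i
      have hne : ν i.castSucc - ν j ≠ 0 := by
        intro h
        exact absurd (hν (by linarith)) (Fin.ne_last_of_lt (Fin.castSucc_lt_last i))
      have := hc' i
      rcases mul_eq_zero.mp this with h | h
      · exact h
      · exact absurd h hne
    have hlast : ∀ t : ℝ, c j * Ai (ν j + t) = 0 := by
      intro t
      have := hvanish t
      rw [Fin.sum_univ_castSucc] at this
      simpa [hcast] using this
    have hcj : c j = 0 := by
      obtain ⟨x, hx⟩ := Function.ne_iff.mp hAi_ne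
      have := hlast (x - ν j)
      rw [add_sub_cancel] at this
      rcases mul_eq_zero.mp this with h | h
      · exact h
      · exact absurd h hx
    intro i
    rcases Fin.lastCases (motive := fun i => c i = 0) hcj hcast i with h
    exact h

/-- If a finite linear combination `∑ c_i Ai(ν_i + t)` vanishes identically in `t`, with
`ν₁,…,ν_k` distinct reals, then all coefficients vanish. `Ai` satisfies `Ai'' = x·Ai`
and is not identically zero. -/
theorem airy_translates_pointwise_linearIndependent
    (Ai : ℝ → ℝ) (hC2 : ContDiff ℝ 2 Ai)
    (hODE : ∀ x, deriv (deriv Ai) x = x * Ai x)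
    (hAi_ne : Ai ≠ 0)
    (k : ℕ) (ν : Fin k → ℝ) (hν : Function.Injective ν) (c : Fin k → ℝ)
    (hvanish : ∀ t : ℝ, ∑ i, c i * Ai (ν i + t) = 0) :
    ∀ i, c i = 0 :=
  airy_aux Ai hC2 hODE hAi_ne k ν hν c hvanish
end

section
/- Suppose K is an orthogonal projection on L²(ℝ), σ : ℝ → [0,1] is measurable, and f ∈ L²(ℝ) satisfies M_{√σ} K M_{√σ} f = f, where M_g denotes multiplication by g. Then g := K(√σ f) satisfies √σ g = f and ‖g‖₂ ≤ ‖σ g‖₂, hence (σ − 1)g = 0 almost everywhere. -/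
open MeasureTheory RealInnerProductSpace

/-- Suppose `K` is an orthogonal projection on `L²(ℝ)`, `σ : ℝ → [0,1]` is measurable,
and `f ∈ L²(ℝ)` satisfies `M_{√σ} K M_{√σ} f = f` (where `sf` represents `√σ·f` and the
fixed-point equation says `√σ · K(sf) = f` a.e.).  Then `g := K(sf)` satisfies
`√σ g = f` a.e., `‖g‖₂ ≤ ‖σ g‖₂`, and `(σ − 1) g = 0` almost everywhere. -/
theorem fixed_point_of_thinned_projection
    (K : Lp ℝ 2 (volume : Measure ℝ) →L[ℝ] Lp ℝ 2 (volume : Measure ℝ))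
    (hK_proj : ∀ u, K (K u) = K u)
    (hK_sa : ∀ u v, ⟪K u, v⟫ = ⟪u, K v⟫)
    (σ : ℝ → ℝ) (hσm : Measurable σ) (hσ : ∀ x, σ x ∈ Set.Icc (0:ℝ) 1)
    (f sf : Lp ℝ 2 (volume : Measure ℝ))
    (hsf : (sf : ℝ → ℝ) =ᵐ[volume] fun x => Real.sqrt (σ x) * (f : ℝ → ℝ) x)
    (hfix : (fun x => Real.sqrt (σ x) * (K sf : ℝ → ℝ) x) =ᵐ[volume] (f : ℝ → ℝ)) :
    ((fun x => Real.sqrt (σ x) * (K sf : ℝ → ℝ) x) =ᵐ[volume] (f : ℝ → ℝ)) ∧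
    ‖K sf‖ ≤ (eLpNorm (fun x => σ x * (K sf : ℝ → ℝ) x) 2 volume).toReal ∧
    (∀ᵐ x ∂(volume : Measure ℝ), (σ x - 1) * (K sf : ℝ → ℝ) x = 0) := by
  set g := K sf with hg
  -- sf = σ · g  a.e.
  have h_sfeq : (sf : ℝ → ℝ) =ᵐ[volume] fun x => σ x * (g : ℝ → ℝ) x := by
    filter_upwards [hsf, hfix] with x h1 h2
    rw [h1, ← h2, ← mul_assoc, Real.mul_self_sqrt (hσ x).1]
  -- inner product identity ⟪g, g⟫ = ⟪sf, g⟫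
  have h_inner : ⟪g, g⟫ = ⟪sf, g⟫ := by
    rw [hg, hK_sa, hK_proj]
  -- norm bound
  have hnorm : ‖g‖ ≤ ‖sf‖ := by
    rcases eq_or_lt_of_le (norm_nonneg g) with h0 | h0
    · rw [← h0]; exact norm_nonneg sf
    · have := real_inner_le_norm sf g
      rw [← h_inner, real_inner_self_eq_norm_mul_norm] at this
      exact le_of_mul_le_mul_right this h0
  have hnorm2 : (eLpNorm (fun x => σ x * (g : ℝ → ℝ) x) 2 volume).toReal = ‖sf‖ := by
    rw [Lp.norm_def, eLpNorm_congr_ae h_sfeq]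
  -- integral identity
  have hint_gg : Integrable (fun x => (g : ℝ → ℝ) x * (g : ℝ → ℝ) x) volume := by
    have := L2.integrable_inner (𝕜 := ℝ) g g
    simpa [RCLike.inner_apply, sq] using this
  have hint_sgg : Integrable (fun x => σ x * ((g : ℝ → ℝ) x * (g : ℝ → ℝ) x)) volume := by
    apply hint_gg.bdd_mul (hσm.aestronglyMeasurable)
    exact ae_of_all _ fun x => (show ‖σ x‖ ≤ 1 by rw [Real.norm_eq_abs, abs_of_nonneg (hσ x).1]; exact (hσ x).2)
  have h_int : ∫ x, (g : ℝ → ℝ) x * (g : ℝ → ℝ) x ∂volume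
      = ∫ x, σ x * ((g : ℝ → ℝ) x * (g : ℝ → ℝ) x) ∂volume := by
    have e1 : ⟪g, g⟫ = ∫ x, (g : ℝ → ℝ) x * (g : ℝ → ℝ) x ∂volume := by
      rw [L2.inner_def]; simp [RCLike.inner_apply, sq]
    have e2 : ⟪sf, g⟫ = ∫ x, σ x * ((g : ℝ → ℝ) x * (g : ℝ → ℝ) x) ∂volume := by
      rw [L2.inner_def]
      refine integral_congr_ae ?_
      filter_upwards [h_sfeq] with x hx
      simp [RCLike.inner_apply, hx, mul_assoc]; ring
    rw [← e1, ← e2, h_inner]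
  have h_zero : ∫ x, (1 - σ x) * ((g : ℝ → ℝ) x * (g : ℝ → ℝ) x) ∂volume = 0 := by
    have : (fun x => (1 - σ x) * ((g : ℝ → ℝ) x * (g : ℝ → ℝ) x))
        = fun x => (g : ℝ → ℝ) x * (g : ℝ → ℝ) x - σ x * ((g : ℝ → ℝ) x * (g : ℝ → ℝ) x) := by
      funext x; ring
    rw [this, integral_sub hint_gg hint_sgg, h_int, sub_self]
  have hae : ∀ᵐ x ∂(volume : Measure ℝ),
      (1 - σ x) * ((g : ℝ → ℝ) x * (g : ℝ → ℝ) x) = 0 := by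
    have hnn : 0 ≤ᵐ[volume] fun x => (1 - σ x) * ((g : ℝ → ℝ) x * (g : ℝ → ℝ) x) :=
      ae_of_all _ fun x => mul_nonneg (by linarith [(hσ x).2]) (mul_self_nonneg _)
    have hintb : Integrable (fun x => (1 - σ x) * ((g : ℝ → ℝ) x * (g : ℝ → ℝ) x)) volume := by
      have : (fun x => (1 - σ x) * ((g : ℝ → ℝ) x * (g : ℝ → ℝ) x))
          = fun x => (g : ℝ → ℝ) x * (g : ℝ → ℝ) x - σ x * ((g : ℝ → ℝ) x * (g : ℝ → ℝ) x) := by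
        funext x; ring
      rw [this]; exact hint_gg.sub hint_sgg
    exact (integral_eq_zero_iff_of_nonneg_ae hnn hintb).mp h_zero
  refine ⟨hfix, ?_, ?_⟩
  · rw [hnorm2]; exact hnorm
  · filter_upwards [hae] with x hx
    rcases mul_eq_zero.mp hx with h | h
    · have : σ x = 1 := by linarith
      rw [this]; ring
    · rw [mul_self_eq_zero.mp h, mul_zero]
end

section
/- Let σ : ℝ → [0,1] be continuous with σ(λ) = O(|λ|^{-3/2-κ}) as λ → −∞ for some κ > 0. Then ∫_ℝ σ(λ) K_s^Ai(λ,λ) dλ is finite for every s ∈ ℝ, and tends to 0 as s → +∞, with rate O(s^{-κ}). -/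
open MeasureTheory Filter Asymptotics Set Real

/-- integrability of `exp (-x)` on `Ioi a` -/
lemma AuxAiry.integrableOn_exp_neg_Ioi (a : ℝ) :
    IntegrableOn (fun x => Real.exp (-x)) (Ioi a) := by
  have h := integrableOn_exp_Iic (-a)
  have := (MeasurePreserving.integrableOn_comp_preimage
      (Measure.measurePreserving_neg (volume : Measure ℝ))
      (Homeomorph.neg ℝ).measurableEmbedding).2 h
  have hs : (Neg.neg ⁻¹' Iic (-a) : Set ℝ) = Ici a := by
    ext x; simp [neg_le]
  rw [hs] at this
  exact this.mono_set Ioi_subset_Ici_self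

lemma AuxAiry.exp2_hasDeriv (x : ℝ) :
    HasDerivAt (fun x : ℝ => -Real.exp (-(2*x)) / 2) (Real.exp (-(2*x))) x := by
  have h1 : HasDerivAt (fun x : ℝ => -(2*x)) (-2) x := by
    simpa [neg_mul] using ((hasDerivAt_id x).const_mul (-2:ℝ))
  have h2 := h1.exp
  have h3 := (h2.neg).div_const 2
  refine h3.congr_deriv ?_
  ring

lemma AuxAiry.exp2_tendsto :
    Tendsto (fun x : ℝ => -Real.exp (-(2*x)) / 2) atTop (nhds 0) := by
  have h : Tendsto (fun x : ℝ => -(2*x)) atTop atBot := by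
    apply tendsto_neg_atTop_atBot.comp
    exact (tendsto_id.const_mul_atTop two_pos)
  have := (Real.tendsto_exp_atBot.comp h).neg.div_const 2
  simpa using this

lemma AuxAiry.integrableOn_exp2_Ioi (a : ℝ) :
    IntegrableOn (fun x => Real.exp (-(2*x))) (Ioi a) := by
  refine integrableOn_Ioi_deriv_of_nonneg' (l := 0) (fun x _ => AuxAiry.exp2_hasDeriv x)
    (fun x _ => (Real.exp_pos _).le) ?_
  simpa using AuxAiry.exp2_tendsto

lemma AuxAiry.integral_exp2_Ioi (a : ℝ) :
    ∫ x in Ioi a, Real.exp (-(2*x)) = Real.exp (-(2*a)) / 2 := by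
  have := integral_Ioi_of_hasDerivAt_of_tendsto' (fun x _ => AuxAiry.exp2_hasDeriv x)
    (AuxAiry.integrableOn_exp2_Ioi a) (by simpa using AuxAiry.exp2_tendsto)
  rw [this]; ring

/-- integrability of `|x| ^ p` on `Iic a` for `a < 0`, `p < -1` -/
lemma AuxAiry.integrableOn_abs_rpow_Iic {p a : ℝ} (hp : p < -1) (ha : a < 0) :
    IntegrableOn (fun x : ℝ => |x| ^ p) (Iic a) := by
  have h := integrableOn_Ioi_rpow_of_lt hp (show (0:ℝ) < -a by linarith)
  have := (MeasurePreserving.integrableOn_comp_preimage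
      (Measure.measurePreserving_neg (volume : Measure ℝ))
      (Homeomorph.neg ℝ).measurableEmbedding).2 h
  have hs : (Neg.neg ⁻¹' Ioi (-a) : Set ℝ) = Iio a := by
    ext x; simp [lt_neg]
  rw [hs] at this
  rw [integrableOn_Iic_iff_integrableOn_Iio]
  refine this.congr_fun (fun x hx => ?_) measurableSet_Iio
  have hx0 : x < 0 := lt_trans hx ha
  simp only [Function.comp]
  rw [abs_of_neg hx0]

lemma AuxAiry.integral_abs_rpow_Iic {κ a : ℝ} (hκ : 0 < κ) (ha : a < 0) :
    ∫ x in Iic a, |x| ^ (-1 - κ) = (-a) ^ (-κ) / κ := by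
  have h1 : ∫ x in Iic a, |x| ^ (-1 - κ) = ∫ x in Iic a, (-x) ^ (-1 - κ) := by
    refine setIntegral_congr_fun measurableSet_Iic (fun x hx => ?_)
    rw [abs_of_neg (lt_of_le_of_lt hx ha)]
  rw [h1, integral_comp_neg_Iic a (fun x => x ^ (-1 - κ)),
    integral_Ioi_rpow_of_lt (by linarith) (by linarith)]
  have hκ' : κ ≠ 0 := ne_of_gt hκ
  rw [show (-1 - κ + 1) = -κ by ring]
  field_simp

lemma AuxAiry.top_bound (Ai : ℝ → ℝ) (hc : Continuous Ai)
    (h : Ai =O[atTop] fun x => Real.exp (-x)) :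
    ∃ C : ℝ, 1 ≤ C ∧ ∀ x, -1 ≤ x → Ai x ^ 2 ≤ C * Real.exp (-(2*x)) := by
  obtain ⟨c, hc'⟩ := h.bound
  obtain ⟨A, hA⟩ := eventually_atTop.1 hc'
  set A' := max A (-1) with hA'
  obtain ⟨M, hM⟩ := (isCompact_Icc (a := (-1:ℝ)) (b := A')).exists_bound_of_continuousOn
    hc.continuousOn
  set C0 : ℝ := max 1 (max c (M * Real.exp A')) with hC0
  have hC01 : (1:ℝ) ≤ C0 := le_max_left _ _
  have key : ∀ x, -1 ≤ x → |Ai x| ≤ C0 * Real.exp (-x) := by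
    intro x hx
    rcases le_or_gt x A' with hxA | hxA
    · have hMx := hM x ⟨hx, hxA⟩
      rw [Real.norm_eq_abs] at hMx
      calc |Ai x| ≤ M := hMx
        _ ≤ M * Real.exp A' * Real.exp (-x) := by
            rw [mul_assoc, ← Real.exp_add]
            nlinarith [Real.one_le_exp (by linarith : (0:ℝ) ≤ A' + -x),
              (abs_nonneg (Ai x)).trans hMx, Real.exp_pos (A' + -x)]
        _ ≤ C0 * Real.exp (-x) := by
            have : M * Real.exp A' ≤ C0 := le_trans (le_max_right _ _) (le_max_right _ _)
            nlinarith [Real.exp_pos (-x)]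
    · have := hA x (le_of_lt (lt_of_le_of_lt (le_max_left A (-1)) hxA))
      rw [Real.norm_eq_abs, Real.norm_eq_abs, abs_of_pos (Real.exp_pos _)] at this
      refine this.trans ?_
      have : c ≤ C0 := le_trans (le_max_left _ _) (le_max_right _ _)
      nlinarith [Real.exp_pos (-x)]
  refine ⟨C0 ^ 2, by nlinarith, fun x hx => ?_⟩
  have h1 := key x hx
  have h2 : Ai x ^ 2 ≤ (C0 * Real.exp (-x)) ^ 2 := by
    rw [← sq_abs]
    exact pow_le_pow_left₀ (abs_nonneg _) h1 2
  have h3 : Real.exp (-x) ^ 2 = Real.exp (-(2*x)) := by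
    rw [sq, ← Real.exp_add]; congr 1; ring
  calc Ai x ^ 2 ≤ (C0 * Real.exp (-x)) ^ 2 := h2
    _ = C0 ^ 2 * Real.exp (-(2*x)) := by rw [mul_pow, h3]

lemma AuxAiry.bot_bound (Ai : ℝ → ℝ) (hc : Continuous Ai)
    (h : Ai =O[atBot] fun x => |x| ^ (-(1/4 : ℝ))) :
    ∃ C : ℝ, 1 ≤ C ∧ ∀ x ≤ (-1:ℝ), Ai x ^ 2 ≤ C * |x| ^ (-(1/2 : ℝ)) := by
  obtain ⟨c, hc'⟩ := h.bound
  obtain ⟨A, hA⟩ := eventually_atBot.1 hc'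
  set A' := min A (-1) with hA'
  obtain ⟨M, hM⟩ := (isCompact_Icc (a := A') (b := (-1:ℝ))).exists_bound_of_continuousOn
    hc.continuousOn
  set C0 : ℝ := max 1 (max c (M * |A'| ^ ((1/4:ℝ)))) with hC0
  have hC01 : (1:ℝ) ≤ C0 := le_max_left _ _
  have key : ∀ x ≤ (-1:ℝ), |Ai x| ≤ C0 * |x| ^ (-(1/4:ℝ)) := by
    intro x hx
    have hx0 : (0:ℝ) < |x| := by rw [abs_of_neg (by linarith)]; linarith
    have hx1 : (1:ℝ) ≤ |x| := by rw [abs_of_neg (by linarith)]; linarith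
    rcases le_or_gt A' x with hxA | hxA
    · have hMx := hM x ⟨hxA, hx⟩
      rw [Real.norm_eq_abs] at hMx
      have hM0 : 0 ≤ M := (abs_nonneg _).trans hMx
      have hA'neg : A' < 0 := lt_of_le_of_lt (min_le_right A (-1)) (by norm_num)
      have hxA' : |x| ≤ |A'| := by
        rw [abs_of_neg (by linarith : x < 0), abs_of_neg hA'neg]
        linarith
      have h4 : |x| ^ ((1/4:ℝ)) ≤ |A'| ^ ((1/4:ℝ)) :=
        Real.rpow_le_rpow (abs_nonneg _) hxA' (by norm_num)
      have hcancel : |x| ^ ((1/4:ℝ)) * |x| ^ (-(1/4:ℝ)) = 1 := by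
        rw [← Real.rpow_add hx0]; norm_num
      calc |Ai x| ≤ M := hMx
        _ = M * (|x| ^ ((1/4:ℝ)) * |x| ^ (-(1/4:ℝ))) := by rw [hcancel, mul_one]
        _ ≤ M * |A'| ^ ((1/4:ℝ)) * |x| ^ (-(1/4:ℝ)) := by
            rw [← mul_assoc]
            exact mul_le_mul_of_nonneg_right (mul_le_mul_of_nonneg_left h4 hM0)
              (Real.rpow_nonneg (abs_nonneg x) _)
        _ ≤ C0 * |x| ^ (-(1/4:ℝ)) := by
            have : M * |A'| ^ ((1/4:ℝ)) ≤ C0 := le_trans (le_max_right _ _) (le_max_right _ _)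
            have := Real.rpow_nonneg (abs_nonneg x) (-(1/4:ℝ))
            nlinarith
    · have := hA x (le_of_lt (lt_of_lt_of_le hxA (min_le_left A (-1))))
      rw [Real.norm_eq_abs, Real.norm_eq_abs,
        abs_of_nonneg (Real.rpow_nonneg (abs_nonneg _) _)] at this
      refine this.trans ?_
      have hcC : c ≤ C0 := le_trans (le_max_left _ _) (le_max_right _ _)
      have := Real.rpow_nonneg (abs_nonneg x) (-(1/4:ℝ))
      nlinarith
  refine ⟨C0 ^ 2, by nlinarith, fun x hx => ?_⟩
  have hx0 : (0:ℝ) < |x| := by rw [abs_of_neg (by linarith)]; linarith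
  have h2 : Ai x ^ 2 ≤ (C0 * |x| ^ (-(1/4:ℝ))) ^ 2 := by
    rw [← sq_abs]
    exact pow_le_pow_left₀ (abs_nonneg _) (key x hx) 2
  calc Ai x ^ 2 ≤ (C0 * |x| ^ (-(1/4:ℝ))) ^ 2 := h2
    _ = C0 ^ 2 * |x| ^ (-(1/2:ℝ)) := by
        rw [mul_pow, sq (|x| ^ (-(1/4:ℝ))), ← Real.rpow_add hx0]
        norm_num


section Kernel
variable {Ai : ℝ → ℝ} (hAic : Continuous Ai) {C C2 : ℝ}
  (hC1 : 1 ≤ C) (hC21 : 1 ≤ C2)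
  (hC : ∀ x, Ai x ^ 2 ≤ C * Real.exp (-(2*x)))
  (h2 : ∀ x ≤ (-1:ℝ), Ai x ^ 2 ≤ C2 * |x| ^ (-(1/2:ℝ)))

include hAic hC1 hC in
lemma AuxAiry.inner_integrable (t : ℝ) :
    IntegrableOn (fun η => Ai (t + η) ^ 2) (Ioi 0) := by
  refine Integrable.mono'
    ((AuxAiry.integrableOn_exp2_Ioi 0).const_mul (C * Real.exp (-(2*t)))) ?_ ?_
  · exact ((hAic.comp (continuous_const.add continuous_id)).pow 2).aestronglyMeasurable
  · filter_upwards with η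
    rw [Real.norm_eq_abs, abs_of_nonneg (sq_nonneg _)]
    have harg : (-(2*(t+η))) = (-(2*t)) + (-(2*η)) := by ring
    calc Ai (t+η)^2 ≤ C * Real.exp (-(2*(t+η))) := hC _
      _ = C * Real.exp (-(2*t)) * Real.exp (-(2*η)) := by rw [harg, Real.exp_add, mul_assoc]

include hAic hC1 hC in
lemma AuxAiry.J_le_exp (t : ℝ) :
    (∫ η in Ioi (0:ℝ), Ai (t + η) ^ 2) ≤ C * Real.exp (-(2*t)) := by
  have hCpos : (0:ℝ) < C := by linarith
  have hmono := setIntegral_mono_on (AuxAiry.inner_integrable hAic hC1 hC t)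
    ((AuxAiry.integrableOn_exp2_Ioi 0).const_mul (C * Real.exp (-(2*t))))
    measurableSet_Ioi (fun η _ => by
      have harg : (-(2*(t+η))) = (-(2*t)) + (-(2*η)) := by ring
      calc Ai (t+η)^2 ≤ C * Real.exp (-(2*(t+η))) := hC _
        _ = C * Real.exp (-(2*t)) * Real.exp (-(2*η)) := by rw [harg, Real.exp_add, mul_assoc])
  refine hmono.trans ?_
  rw [integral_const_mul, AuxAiry.integral_exp2_Ioi 0]
  have h0 : Real.exp (-(2*(0:ℝ))) = 1 := by norm_num
  rw [h0]
  nlinarith [Real.exp_pos (-(2*t))]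

include hAic hC1 hC21 hC h2 in
lemma AuxAiry.J_sqrt {t : ℝ} (ht : t ≤ -1) :
    (∫ η in Ioi (0:ℝ), Ai (t + η) ^ 2) ≤ (2*C2 + C*Real.exp 2) * |t| ^ ((1/2:ℝ)) := by
  have hb : (0:ℝ) ≤ -1 - t := by linarith
  have habs : |t| = -t := abs_of_neg (by linarith)
  have int0 := AuxAiry.inner_integrable hAic hC1 hC t
  have int1 : IntegrableOn (fun η => Ai (t + η) ^ 2) (Ioc 0 (-1-t)) :=
    int0.mono_set Ioc_subset_Ioi_self
  have int2 : IntegrableOn (fun η => Ai (t + η) ^ 2) (Ioi (-1-t)) :=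
    int0.mono_set (Ioi_subset_Ioi hb)
  have hsplit : (∫ η in Ioi (0:ℝ), Ai (t + η) ^ 2)
      = (∫ η in Ioc 0 (-1-t), Ai (t + η) ^ 2) + ∫ η in Ioi (-1-t), Ai (t + η) ^ 2 := by
    rw [← setIntegral_union (Ioc_disjoint_Ioi le_rfl) measurableSet_Ioi int1 int2,
      Ioc_union_Ioi_eq_Ioi hb]
  -- piece A
  have hmajA : IntegrableOn (fun η => C2 * |t + η| ^ (-(1/2:ℝ))) (Ioc 0 (-1-t)) := by
    refine (ContinuousOn.integrableOn_Icc ?_).mono_set Ioc_subset_Icc_self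
    refine continuousOn_const.mul (ContinuousOn.rpow_const ?_ (fun η hη => Or.inl ?_))
    · exact (continuous_abs.comp (continuous_const.add continuous_id)).continuousOn
    · have : t + η ≤ -1 := by linarith [hη.2]
      intro hzero
      rw [abs_eq_zero] at hzero
      linarith
  have hA : (∫ η in Ioc 0 (-1-t), Ai (t + η) ^ 2)
      ≤ ∫ η in Ioc 0 (-1-t), C2 * |t + η| ^ (-(1/2:ℝ)) := by
    refine setIntegral_mono_on int1 hmajA measurableSet_Ioc (fun η hη => ?_)
    exact h2 (t + η) (by linarith [hη.2])
  have hAval : (∫ η in Ioc 0 (-1-t), C2 * |t + η| ^ (-(1/2:ℝ)))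
      ≤ C2 * (2 * |t| ^ ((1/2:ℝ))) := by
    rw [integral_const_mul]
    have hrw : (∫ η in Ioc 0 (-1-t), |t + η| ^ (-(1/2:ℝ)))
        = ∫ η in (0:ℝ)..(-1-t), (-t - η) ^ (-(1/2:ℝ)) := by
      rw [intervalIntegral.integral_of_le hb]
      refine setIntegral_congr_fun measurableSet_Ioc (fun η hη => ?_)
      have : t + η ≤ -1 := by linarith [hη.2]
      rw [abs_of_neg (by linarith : t + η < 0)]
      ring_nf
    rw [hrw, intervalIntegral.integral_comp_sub_left (fun u => u ^ (-(1/2:ℝ))) (-t)]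
    have h1 : -t - (-1 - t) = 1 := by ring
    have h2' : -t - 0 = -t := by ring
    rw [h1, h2', integral_rpow (Or.inl (by norm_num : (-1:ℝ) < -(1/2)))]
    have hhalf : (-(1/2:ℝ) + 1) = 1/2 := by norm_num
    rw [hhalf, Real.one_rpow, habs]
    have hnn : (0:ℝ) ≤ (-t) ^ ((1/2:ℝ)) := Real.rpow_nonneg (by linarith) _
    have hC2pos : (0:ℝ) < C2 := by linarith
    have hdiv : ((-t) ^ ((1/2:ℝ)) - 1)/(1/2) = 2*(-t) ^ ((1/2:ℝ)) - 2 := by ring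
    rw [hdiv]
    nlinarith
  -- piece B
  have hmajB : IntegrableOn (fun η => C * Real.exp (-(2*t)) * Real.exp (-(2*η))) (Ioi (-1-t)) :=
    (AuxAiry.integrableOn_exp2_Ioi (-1-t)).const_mul _
  have hB : (∫ η in Ioi (-1-t), Ai (t + η) ^ 2)
      ≤ ∫ η in Ioi (-1-t), C * Real.exp (-(2*t)) * Real.exp (-(2*η)) := by
    refine setIntegral_mono_on int2 hmajB measurableSet_Ioi (fun η _ => ?_)
    have harg : (-(2*(t+η))) = (-(2*t)) + (-(2*η)) := by ring
    calc Ai (t+η)^2 ≤ C * Real.exp (-(2*(t+η))) := hC _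
      _ = C * Real.exp (-(2*t)) * Real.exp (-(2*η)) := by rw [harg, Real.exp_add, mul_assoc]
  have hBval : (∫ η in Ioi (-1-t), C * Real.exp (-(2*t)) * Real.exp (-(2*η)))
      = C * Real.exp 2 / 2 := by
    rw [integral_const_mul, AuxAiry.integral_exp2_Ioi (-1-t)]
    have : Real.exp (-(2*t)) * Real.exp (-(2*(-1-t))) = Real.exp 2 := by
      rw [← Real.exp_add]; congr 1; ring
    field_simp
    nlinarith [this]
  -- combine
  have hone : (1:ℝ) ≤ |t| ^ ((1/2:ℝ)) :=
    Real.one_le_rpow (by rw [habs]; linarith) (by norm_num)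
  have hCe : (0:ℝ) < C * Real.exp 2 := by positivity
  rw [hsplit]
  have := hA.trans hAval
  have := hB.trans_eq hBval
  nlinarith [Real.rpow_nonneg (abs_nonneg t) ((1/2:ℝ))]
end Kernel

set_option maxHeartbeats 1000000 in
/-- If `σ : ℝ → [0,1]` is continuous with `σ(λ) = O(|λ|^{-3/2-κ})` as `λ → −∞` for some
`κ > 0`, then `∫_ℝ σ(λ) K_s^Ai(λ,λ) dλ` is finite for every `s`, and is `O(s^{-κ})`
as `s → +∞`.  Here `K_s^Ai(λ,λ) = ∫₀^∞ Ai(λ+η+s)² dη`, and `Ai` is the Airy function,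
with its standard decay: `Ai(x) = O(e^{−x})` at `+∞` and `Ai(x) = O(|x|^{−1/4})` at
`−∞`. -/
theorem thinned_airy_trace_finite_and_decay
    (Ai σ : ℝ → ℝ) (hAic : Continuous Ai)
    (hAitop : Ai =O[atTop] fun x => Real.exp (-x))
    (hAibot : Ai =O[atBot] fun x => |x| ^ (-(1/4 : ℝ)))
    (hσc : Continuous σ) (hσ : ∀ x, σ x ∈ Set.Icc (0:ℝ) 1)
    (κ : ℝ) (hκ : 0 < κ)
    (hdecay : σ =O[atBot] fun x => |x| ^ (-(3/2 : ℝ) - κ)) :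
    (∀ s : ℝ, Integrable
      (fun l => σ l * ∫ η in Set.Ioi (0:ℝ), (Ai (l + η + s)) ^ 2)) ∧
    (fun s => ∫ l, σ l * ∫ η in Set.Ioi (0:ℝ), (Ai (l + η + s)) ^ 2)
      =O[atTop] fun s => s ^ (-κ) := by
  classical
  -- constants for the Airy bounds
  obtain ⟨C₁, hC11, hCtop⟩ := AuxAiry.top_bound Ai hAic hAitop
  obtain ⟨C₂, hC21, hCbot0⟩ := AuxAiry.bot_bound Ai hAic hAibot
  set CC : ℝ := max C₁ C₂ with hCCdef
  have hCC1 : (1:ℝ) ≤ CC := le_trans hC11 (le_max_left _ _)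
  have hCC0 : (0:ℝ) < CC := by linarith
  have hexp : ∀ x, Ai x ^ 2 ≤ CC * Real.exp (-(2*x)) := by
    intro x
    rcases le_or_gt (-1) x with hx | hx
    · exact (hCtop x hx).trans
        (mul_le_mul_of_nonneg_right (le_max_left _ _) (Real.exp_pos _).le)
    · have h1 := hCbot0 x hx.le
      have habs1 : (1:ℝ) ≤ |x| := by rw [abs_of_neg (by linarith)]; linarith
      have h2 : |x| ^ (-(1/2:ℝ)) ≤ 1 :=
        Real.rpow_le_one_of_one_le_of_nonpos habs1 (by norm_num)
      have h3 : (1:ℝ) ≤ Real.exp (-(2*x)) := Real.one_le_exp (by linarith)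
      have hC2CC : C₂ ≤ CC := le_max_right _ _
      nlinarith [Real.rpow_nonneg (abs_nonneg x) (-(1/2:ℝ))]
  have hbot : ∀ x ≤ (-1:ℝ), Ai x ^ 2 ≤ CC * |x| ^ (-(1/2:ℝ)) := by
    intro x hx
    refine (hCbot0 x hx).trans ?_
    exact mul_le_mul_of_nonneg_right (le_max_right _ _)
      (Real.rpow_nonneg (abs_nonneg _) _)
  set D : ℝ := 2*CC + CC*Real.exp 2 with hDdef
  have hD0 : (0:ℝ) < D := by positivity
  -- σ decay constants
  obtain ⟨c₀, hc₀⟩ := hdecay.bound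
  obtain ⟨B₀, hB₀⟩ := eventually_atBot.1 hc₀
  set E : ℝ := max c₀ 1 with hEdef
  have hE1 : (1:ℝ) ≤ E := le_max_right _ _
  have hE0 : (0:ℝ) < E := by linarith
  set B : ℝ := max (-B₀) 1 with hBdef
  have hB1 : (1:ℝ) ≤ B := le_max_right _ _
  have hσdecay : ∀ l ≤ -B, σ l ≤ E * |l| ^ (-(3/2 : ℝ) - κ) := by
    intro l hl
    have hlB0 : l ≤ B₀ := by
      have : -B ≤ B₀ := by
        have := le_max_left (-B₀) 1
        simp only [hBdef] at *
        linarith [le_max_left (-B₀) (1:ℝ)]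
      linarith
    have := hB₀ l hlB0
    rw [Real.norm_eq_abs, Real.norm_eq_abs, abs_of_nonneg (hσ l).1,
      abs_of_nonneg (Real.rpow_nonneg (abs_nonneg _) _)] at this
    refine this.trans ?_
    exact mul_le_mul_of_nonneg_right (le_max_left _ _)
      (Real.rpow_nonneg (abs_nonneg _) _)
  -- the kernel function J
  set J : ℝ → ℝ := fun t => ∫ η in Set.Ioi (0:ℝ), Ai (t + η) ^ 2 with hJdef
  have hJnn : ∀ t, 0 ≤ J t := fun t =>
    setIntegral_nonneg measurableSet_Ioi (fun η _ => sq_nonneg _)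
  have hJexp : ∀ t, J t ≤ CC * Real.exp (-(2*t)) := fun t =>
    AuxAiry.J_le_exp hAic hCC1 hexp t
  have hJsq : ∀ t ≤ (-1:ℝ), J t ≤ D * |t| ^ ((1/2:ℝ)) := fun t ht =>
    AuxAiry.J_sqrt hAic hCC1 hCC1 hexp hbot ht
  -- measurability
  have hinner_cont : Continuous fun p : ℝ × ℝ => Ai (p.1 + p.2) ^ 2 :=
    (hAic.comp (continuous_fst.add continuous_snd)).pow 2
  have hJsm : StronglyMeasurable J :=
    hinner_cont.stronglyMeasurable.integral_prod_right'
  have hsm : ∀ s : ℝ, AEStronglyMeasurable (fun l => σ l * J (l + s)) volume := by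
    intro s
    exact (hσc.stronglyMeasurable.mul
      (hJsm.comp_measurable (measurable_id.add_const s))).aestronglyMeasurable
  have hfnn : ∀ s l : ℝ, 0 ≤ σ l * J (l + s) := fun s l =>
    mul_nonneg (hσ l).1 (hJnn _)
  -- rewriting the statement's function in terms of J
  have hgoalfun : ∀ s : ℝ,
      (fun l => σ l * ∫ η in Set.Ioi (0:ℝ), (Ai (l + η + s)) ^ 2)
        = fun l => σ l * J (l + s) := by
    intro s
    funext l
    congr 1
    refine setIntegral_congr_fun measurableSet_Ioi (fun η _ => ?_)
    rw [show l + η + s = l + s + η from by ring]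
  -- integrability
  have key : ∀ s : ℝ, Integrable (fun l => σ l * J (l + s)) := by
    intro s
    set a : ℝ := min (-s-1) (-B) with hadef
    have haB : a ≤ -B := min_le_right _ _
    have ha1 : a ≤ -1 := by linarith
    have ha0 : a < 0 := by linarith
    have has : a + s ≤ -1 := by
      have := min_le_left (-s-1) (-B); linarith
    have hIoi : IntegrableOn (fun l => σ l * J (l+s)) (Set.Ioi a) := by
      refine Integrable.mono'
        ((AuxAiry.integrableOn_exp2_Ioi a).const_mul (CC * Real.exp (-(2*s))))
        ((hsm s).restrict) ?_
      filter_upwards with l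
      rw [Real.norm_eq_abs, abs_of_nonneg (hfnn s l)]
      have harg : (-(2*(l+s))) = (-(2*s)) + (-(2*l)) := by ring
      calc σ l * J (l+s) ≤ 1 * J (l+s) :=
            mul_le_mul_of_nonneg_right (hσ l).2 (hJnn _)
        _ = J (l+s) := one_mul _
        _ ≤ CC * Real.exp (-(2*(l+s))) := hJexp _
        _ = CC * Real.exp (-(2*s)) * Real.exp (-(2*l)) := by
            rw [harg, Real.exp_add, mul_assoc]
    have hIic : IntegrableOn (fun l => σ l * J (l+s)) (Set.Iic a) := by
      refine Integrable.mono'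
        ((AuxAiry.integrableOn_abs_rpow_Iic (show (-1-κ) < -1 by linarith) ha0).const_mul
          (E * D * (1+|s|) ^ ((1/2:ℝ))))
        ((hsm s).restrict) ?_
      filter_upwards [ae_restrict_mem measurableSet_Iic] with l hl
      simp only [Set.mem_Iic] at hl
      have hlB : l ≤ -B := hl.trans haB
      have hlneg : l < 0 := by linarith
      have hl0 : (0:ℝ) < |l| := by rw [abs_of_neg hlneg]; linarith
      have habs1 : (1:ℝ) ≤ |l| := by rw [abs_of_neg hlneg]; linarith
      have hls : l + s ≤ -1 := by linarith
      rw [Real.norm_eq_abs, abs_of_nonneg (hfnn s l)]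
      have h1 : σ l ≤ E * |l| ^ (-(3/2 : ℝ) - κ) := hσdecay l hlB
      have h2 : J (l+s) ≤ D * |l+s| ^ ((1/2:ℝ)) := hJsq _ hls
      have h3 : |l+s| ^ ((1/2:ℝ)) ≤ (1+|s|) ^ ((1/2:ℝ)) * |l| ^ ((1/2:ℝ)) := by
        rw [← Real.mul_rpow (by positivity) (abs_nonneg _)]
        refine Real.rpow_le_rpow (abs_nonneg _) ?_ (by norm_num)
        calc |l+s| ≤ |l| + |s| := abs_add_le _ _
          _ ≤ (1+|s|) * |l| := by nlinarith [abs_nonneg s]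
      have h4 : |l| ^ (-(3/2 : ℝ) - κ) * |l| ^ ((1/2:ℝ)) = |l| ^ (-1-κ) := by
        rw [← Real.rpow_add hl0]; congr 1; ring
      calc σ l * J (l+s)
          ≤ (E * |l| ^ (-(3/2 : ℝ) - κ)) * (D * ((1+|s|) ^ ((1/2:ℝ)) * |l| ^ ((1/2:ℝ)))) := by
            refine mul_le_mul h1 (h2.trans ?_) (hJnn _) (by positivity)
            exact mul_le_mul_of_nonneg_left h3 hD0.le
        _ = E * D * (1+|s|) ^ ((1/2:ℝ)) * (|l| ^ (-(3/2 : ℝ) - κ) * |l| ^ ((1/2:ℝ))) := by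
            ring
        _ = E * D * (1+|s|) ^ ((1/2:ℝ)) * |l| ^ (-1-κ) := by rw [h4]
    have hU := hIic.union hIoi
    rw [Set.Iic_union_Ioi] at hU
    exact integrableOn_univ.1 hU
  refine ⟨fun s => by rw [hgoalfun s]; exact key s, ?_⟩
  -- the decay estimate
  rw [isBigO_iff]
  set G : ℝ := E * (CC * Real.exp 2 + 2*D) with hGdef
  have hG0 : (0:ℝ) < G := by positivity
  refine ⟨G * (2:ℝ) ^ κ / κ + CC, ?_⟩
  have hev2 : ∀ᶠ s : ℝ in atTop, s ^ κ ≤ Real.exp s := by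
    have h := (isLittleO_rpow_exp_atTop κ).bound zero_lt_one
    filter_upwards [h, eventually_ge_atTop (0:ℝ)] with s hs hs0
    rw [Real.norm_eq_abs, Real.norm_eq_abs, abs_of_nonneg (Real.rpow_nonneg hs0 _),
      abs_of_pos (Real.exp_pos _), one_mul] at hs
    exact hs
  filter_upwards [eventually_ge_atTop (max (2*B) 2), hev2] with s hsB hsexp
  have hs2 : (2:ℝ) ≤ s := le_trans (le_max_right _ _) hsB
  have hsB' : 2*B ≤ s := le_trans (le_max_left _ _) hsB
  have hs0 : (0:ℝ) < s := by linarith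
  have ha2 : (-s/2 : ℝ) < 0 := by linarith
  have ha2B : (-s/2 : ℝ) ≤ -B := by linarith
  have ha21 : (-s/2 : ℝ) ≤ -1 := by linarith
  have hsk0 : (0:ℝ) < s ^ (-κ) := Real.rpow_pos_of_pos hs0 _
  rw [hgoalfun s]
  -- split the integral
  have hsplit : (∫ l, σ l * J (l + s))
      = (∫ l in Set.Iic (-s/2), σ l * J (l+s)) + ∫ l in Set.Ioi (-s/2), σ l * J (l+s) :=
    (intervalIntegral.integral_Iic_add_Ioi (key s).integrableOn (key s).integrableOn).symm
  -- piece 1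
  have hmaj1 : IntegrableOn (fun l : ℝ => G * |l| ^ (-1-κ)) (Set.Iic (-s/2)) :=
    (AuxAiry.integrableOn_abs_rpow_Iic (show (-1-κ) < -1 by linarith) ha2).const_mul G
  have hP1 : (∫ l in Set.Iic (-s/2), σ l * J (l+s))
      ≤ ∫ l in Set.Iic (-s/2), G * |l| ^ (-1-κ) := by
    refine setIntegral_mono_on (key s).integrableOn hmaj1 measurableSet_Iic ?_
    intro l hl
    simp only [Set.mem_Iic] at hl
    have hlneg : l < 0 := by linarith
    have hl0 : (0:ℝ) < |l| := by rw [abs_of_neg hlneg]; linarith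
    have habs1 : (1:ℝ) ≤ |l| := by rw [abs_of_neg hlneg]; linarith
    have hlB : l ≤ -B := by linarith
    have h1 : σ l ≤ E * |l| ^ (-(3/2 : ℝ) - κ) := hσdecay l hlB
    have hJb : J (l+s) ≤ CC * Real.exp 2 + 2*D*|l| ^ ((1/2:ℝ)) := by
      rcases le_or_gt (l+s) (-1) with h | h
      · refine (hJsq _ h).trans ?_
        have hsl : s ≤ 2*|l| := by rw [abs_of_neg hlneg]; linarith
        have h5 : |l+s| ≤ 4*|l| := by
          calc |l+s| ≤ |l| + |s| := abs_add_le _ _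
            _ = |l| + s := by rw [abs_of_nonneg (by linarith : (0:ℝ) ≤ s)]
            _ ≤ 4*|l| := by linarith [abs_nonneg l]
        have h6 : |l+s| ^ ((1/2:ℝ)) ≤ (4*|l|) ^ ((1/2:ℝ)) :=
          Real.rpow_le_rpow (abs_nonneg _) h5 (by norm_num)
        have h7 : ((4:ℝ)*|l|) ^ ((1/2:ℝ)) = 2 * |l| ^ ((1/2:ℝ)) := by
          rw [Real.mul_rpow (by norm_num) (abs_nonneg _)]
          congr 1
          rw [show (4:ℝ) = 2^(2:ℕ) by norm_num, ← Real.rpow_natCast (2:ℝ) 2,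
            ← Real.rpow_mul (by norm_num : (0:ℝ) ≤ 2)]
          norm_num
        rw [h7] at h6
        nlinarith [mul_le_mul_of_nonneg_left h6 hD0.le, Real.exp_pos 2]
      · refine (hJexp _).trans ?_
        have h8 : Real.exp (-(2*(l+s))) ≤ Real.exp 2 := Real.exp_le_exp.2 (by linarith)
        nlinarith [Real.rpow_nonneg (abs_nonneg l) ((1/2:ℝ))]
    have h4 : |l| ^ (-(3/2 : ℝ) - κ) * |l| ^ ((1/2:ℝ)) = |l| ^ (-1-κ) := by
      rw [← Real.rpow_add hl0]; congr 1; ring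
    have hmono : |l| ^ (-(3/2 : ℝ) - κ) ≤ |l| ^ (-1-κ) :=
      Real.rpow_le_rpow_of_exponent_le habs1 (by linarith)
    have hq1 : σ l * J (l+s)
        ≤ (E * |l| ^ (-(3/2 : ℝ) - κ)) * (CC * Real.exp 2 + 2*D*|l| ^ ((1/2:ℝ))) :=
      mul_le_mul h1 hJb (hJnn _) (by positivity)
    have hq2 : (E * |l| ^ (-(3/2 : ℝ) - κ)) * (CC * Real.exp 2 + 2*D*|l| ^ ((1/2:ℝ)))
        = E * CC * Real.exp 2 * |l| ^ (-(3/2 : ℝ) - κ)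
          + 2*E*D*(|l| ^ (-(3/2 : ℝ) - κ) * |l| ^ ((1/2:ℝ))) := by ring
    rw [hq2, h4] at hq1
    refine hq1.trans ?_
    have hrnn : (0:ℝ) ≤ |l| ^ (-1-κ) := Real.rpow_nonneg (abs_nonneg _) _
    rw [hGdef]
    nlinarith [mul_le_mul_of_nonneg_left hmono
      (show (0:ℝ) ≤ E * CC * Real.exp 2 by positivity)]
  have hval1 : (∫ l in Set.Iic (-s/2), G * |l| ^ (-1-κ)) = G * ((s/2) ^ (-κ) / κ) := by
    rw [integral_const_mul, AuxAiry.integral_abs_rpow_Iic hκ ha2,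
      show -(-s/2) = s/2 from by ring]
  have hhalfpow : (s/2 : ℝ) ^ (-κ) = (2:ℝ) ^ κ * s ^ (-κ) := by
    rw [Real.div_rpow hs0.le (by norm_num : (0:ℝ) ≤ 2),
      Real.rpow_neg (by norm_num : (0:ℝ) ≤ 2), div_eq_mul_inv, inv_inv]
    ring
  -- piece 2
  have hmaj2 : IntegrableOn (fun l : ℝ => CC * Real.exp (-(2*s)) * Real.exp (-(2*l)))
      (Set.Ioi (-s/2)) :=
    (AuxAiry.integrableOn_exp2_Ioi _).const_mul _
  have hP2 : (∫ l in Set.Ioi (-s/2), σ l * J (l+s))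
      ≤ ∫ l in Set.Ioi (-s/2), CC * Real.exp (-(2*s)) * Real.exp (-(2*l)) := by
    refine setIntegral_mono_on (key s).integrableOn hmaj2 measurableSet_Ioi ?_
    intro l _
    have harg : (-(2*(l+s))) = (-(2*s)) + (-(2*l)) := by ring
    calc σ l * J (l+s) ≤ 1 * J (l+s) :=
          mul_le_mul_of_nonneg_right (hσ l).2 (hJnn _)
      _ = J (l+s) := one_mul _
      _ ≤ CC * Real.exp (-(2*(l+s))) := hJexp _
      _ = CC * Real.exp (-(2*s)) * Real.exp (-(2*l)) := by
          rw [harg, Real.exp_add, mul_assoc]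
  have hval2 : (∫ l in Set.Ioi (-s/2), CC * Real.exp (-(2*s)) * Real.exp (-(2*l)))
      = CC * Real.exp (-s) / 2 := by
    rw [integral_const_mul, AuxAiry.integral_exp2_Ioi]
    have h9 : Real.exp (-(2*s)) * Real.exp (-(2*(-s/2))) = Real.exp (-s) := by
      rw [← Real.exp_add]; congr 1; ring
    linear_combination (CC/2) * h9
  have hexpneg : Real.exp (-s) ≤ s ^ (-κ) := by
    rw [Real.exp_neg, Real.rpow_neg hs0.le]
    exact inv_anti₀ (Real.rpow_pos_of_pos hs0 κ) hsexp
  -- assemble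
  have hintnn : (0:ℝ) ≤ ∫ l, σ l * J (l + s) := integral_nonneg (hfnn s)
  rw [Real.norm_eq_abs, abs_of_nonneg hintnn, Real.norm_eq_abs,
    abs_of_nonneg (Real.rpow_nonneg hs0.le _), hsplit]
  have e1 : (∫ l in Set.Iic (-s/2), σ l * J (l+s)) ≤ G * (2:ℝ) ^ κ / κ * s ^ (-κ) := by
    refine (hP1.trans_eq hval1).trans (le_of_eq ?_)
    rw [hhalfpow]
    ring
  have e2 : (∫ l in Set.Ioi (-s/2), σ l * J (l+s)) ≤ CC * s ^ (-κ) := by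
    refine (hP2.trans_eq hval2).trans ?_
    nlinarith [Real.exp_pos (-s), hexpneg]
  nlinarith [e1, e2]
end
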